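/- Let f and φ be maps on the n-torus with ⫴f⫴_s and ‖φ‖_s finite, where ⫴·⫴_s is the strip-averaged L² norm with weights w_k(2s) and ‖·‖_s is the Wiener norm. Then for every 0 < α < 1, ⫴Df · φ⫴_{αs} ≤ (1/(e α^{n/2})) · (1/((1−α)s)) · ⫴f⫴_s · ‖φ‖_s. -/

import Mathlib

open scoped BigOperators

noncomputable section

/-- ℓ¹-norm of an integer vector. -/
def l1 {n : ℕ} (k : Fin n → ℤ) : ℝ := ∑ i, |(k i : ℝ)|

/-- sinh x / x, extended by 1 at x = 0. -/
def sr (x : ℝ) : ℝ := if x = 0 then 1 else Real.sinh x / x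

/-- The weight w_k(t) = ∏ i, sinh (t k i) / (t k i). -/
def wt {n : ℕ} (t : ℝ) (k : Fin n → ℤ) : ℝ := ∏ i, sr (t * (k i : ℝ))

/-- Wiener (analytic) norm of a Fourier coefficient family. -/
def wiener {n : ℕ} (c : (Fin n → ℤ) → ℂ) (s : ℝ) : ℝ :=
  ∑' k, ‖c k‖ * Real.exp (s * l1 k)

/-- Strip-averaged L² norm of a Fourier coefficient family. -/
def stripL2 {n : ℕ} (c : (Fin n → ℤ) → ℂ) (s : ℝ) : ℝ :=
  Real.sqrt (∑' k, ‖c k‖ ^ 2 * wt (2 * s) k)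

lemma sr_zero : sr 0 = 1 := if_pos rfl

lemma sr_of_ne {x : ℝ} (hx : x ≠ 0) : sr x = Real.sinh x / x := if_neg hx

lemma sr_neg (x : ℝ) : sr (-x) = sr x := by
  rcases eq_or_ne x 0 with h | h
  · simp [h]
  · rw [sr_of_ne (neg_ne_zero.2 h), sr_of_ne h, Real.sinh_neg, neg_div_neg_eq]

lemma sr_abs (x : ℝ) : sr |x| = sr x := by
  rcases abs_cases x with ⟨h, _⟩ | ⟨h, _⟩
  · rw [h]
  · rw [h, sr_neg]

lemma one_le_sr (x : ℝ) : 1 ≤ sr x := by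
  rw [← sr_abs]
  rcases (abs_nonneg x).eq_or_lt.imp Eq.symm id with h | h
  · simp [h, sr_zero]
  · rw [sr_of_ne h.ne', le_div_iff₀ h]
    simpa using (Real.self_lt_sinh_iff.2 h).le

lemma sr_nonneg (x : ℝ) : 0 ≤ sr x := zero_le_one.trans (one_le_sr x)

lemma J_eq {x : ℝ} (hx : x ≠ 0) :
    (∫ u in (0:ℝ)..1, Real.exp (x * u)) = (Real.exp x - 1) / x := by
  rw [intervalIntegral.integral_comp_mul_left (fun v => Real.exp v) hx]
  simp [integral_exp]
  ring

lemma J_zero : (∫ u in (0:ℝ)..1, Real.exp ((0:ℝ) * u)) = 1 := by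
  simp

lemma J_mono {x y : ℝ} (h : x ≤ y) :
    (∫ u in (0:ℝ)..1, Real.exp (x * u)) ≤ ∫ u in (0:ℝ)..1, Real.exp (y * u) := by
  apply intervalIntegral.integral_mono_on (by norm_num)
  · exact (Real.continuous_exp.comp (continuous_const.mul continuous_id)).intervalIntegrable 0 1
  · exact (Real.continuous_exp.comp (continuous_const.mul continuous_id)).intervalIntegrable 0 1
  · intro u hu
    exact Real.exp_le_exp.2 (mul_le_mul_of_nonneg_right h hu.1)

lemma integral_cosh' (a b : ℝ) :
    (∫ v in a..b, Real.cosh v) = Real.sinh b - Real.sinh a := by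
  apply intervalIntegral.integral_eq_sub_of_hasDerivAt
    (fun v _ => Real.hasDerivAt_sinh v)
  exact Real.continuous_cosh.intervalIntegrable a b

lemma sr_int (x : ℝ) : sr x = ∫ u in (0:ℝ)..1, Real.cosh (x * u) := by
  rcases eq_or_ne x 0 with h | h
  · simp [h, sr_zero]
  · rw [intervalIntegral.integral_comp_mul_left (fun v => Real.cosh v) h]
    rw [sr_of_ne h]
    simp [integral_cosh']
    ring

lemma sr_mono {x y : ℝ} (hx : 0 ≤ x) (hxy : x ≤ y) : sr x ≤ sr y := by
  rw [sr_int, sr_int]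
  apply intervalIntegral.integral_mono_on (by norm_num)
  · exact (Real.continuous_cosh.comp (continuous_const.mul continuous_id)).intervalIntegrable 0 1
  · exact (Real.continuous_cosh.comp (continuous_const.mul continuous_id)).intervalIntegrable 0 1
  · intro u hu
    rw [Real.cosh_le_cosh]
    rw [abs_of_nonneg (mul_nonneg hx hu.1), abs_of_nonneg (mul_nonneg (hx.trans hxy) hu.1)]
    exact mul_le_mul_of_nonneg_right hxy hu.1

lemma sr_mul_exp {x : ℝ} (hx : 0 ≤ x) :
    sr x * Real.exp (-x) = ∫ u in (0:ℝ)..1, Real.exp (-2 * x * u) := by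
  rcases hx.eq_or_lt.imp Eq.symm id with h | h
  · subst h; simp [sr_zero]
  · rw [J_eq (by nlinarith : (-2) * x ≠ 0), sr_of_ne h.ne', Real.sinh_eq]
    have h1 : Real.exp (-(2 * x)) = Real.exp (-x) * Real.exp (-x) := by
      rw [← Real.exp_add]; ring_nf
    have h2 : Real.exp (-x) * Real.exp x = 1 := by
      rw [← Real.exp_add]; simp
    field_simp
    have h1' : Real.exp (-(x * 2)) = Real.exp (-x) * Real.exp (-x) := by
      rw [← Real.exp_add]; ring_nf
    linear_combination h2 + h1'

lemma H_antitone {x y : ℝ} (hx : 0 ≤ x) (hxy : x ≤ y) :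
    sr y * Real.exp (-y) ≤ sr x * Real.exp (-x) := by
  rw [sr_mul_exp hx, sr_mul_exp (hx.trans hxy)]
  have : ∀ u : ℝ, -2 * y * u = (-2 * y) * u := fun u => rfl
  exact J_mono (by nlinarith)

lemma sr_submult (u v : ℝ) : sr u ≤ sr v * Real.exp |u - v| := by
  rw [← sr_abs u, ← sr_abs v]
  have habs : (abs (|u| - |v|)) ≤ |u - v| := abs_abs_sub_abs_le_abs_sub u v
  have hexp : Real.exp (abs (|u| - |v|)) ≤ Real.exp |u - v| := Real.exp_le_exp.2 habs
  have key : sr |u| ≤ sr |v| * Real.exp (abs (|u| - |v|)) := by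
    rcases le_total |u| |v| with h | h
    · calc sr |u| ≤ sr |v| := sr_mono (abs_nonneg u) h
        _ = sr |v| * 1 := (mul_one _).symm
        _ ≤ sr |v| * Real.exp (abs (|u| - |v|)) := by
            exact mul_le_mul_of_nonneg_left (Real.one_le_exp (abs_nonneg _)) (sr_nonneg _)
    · have h1 : sr |u| * Real.exp (-|u|) ≤ sr |v| * Real.exp (-|v|) :=
        H_antitone (abs_nonneg v) h
      have h2 : Real.exp (abs (|u| - |v|)) = Real.exp |u| * Real.exp (-|v|) := by
        rw [abs_of_nonneg (sub_nonneg.2 h), ← Real.exp_add]; ring_nf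
      rw [h2]
      have h3 : (0:ℝ) < Real.exp |u| := Real.exp_pos _
      have h4 : sr |u| = sr |u| * Real.exp (-|u|) * Real.exp |u| := by
        rw [mul_assoc, ← Real.exp_add]; simp
      rw [h4]
      calc sr |u| * Real.exp (-|u|) * Real.exp |u|
          ≤ sr |v| * Real.exp (-|v|) * Real.exp |u| :=
            mul_le_mul_of_nonneg_right h1 h3.le
        _ = sr |v| * (Real.exp |u| * Real.exp (-|v|)) := by ring
  exact key.trans (mul_le_mul_of_nonneg_left hexp (sr_nonneg _))

lemma sr_scale_core {a x : ℝ} (ha : 0 < a) (ha1 : a ≤ 1) (hx : 0 ≤ x) :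
    a * (sr (a * x) * Real.exp (-(a * x))) ≤ sr x * Real.exp (-x) := by
  rcases hx.eq_or_lt.imp Eq.symm id with h | h
  · subst h
    simp [sr_zero]
    exact ha1
  · rw [sr_mul_exp (by positivity : (0:ℝ) ≤ a * x), sr_mul_exp hx,
      J_eq (by nlinarith : (-2) * (a * x) ≠ 0), J_eq (by nlinarith : (-2) * x ≠ 0)]
    have he : Real.exp (-2 * x) ≤ Real.exp (-2 * (a * x)) := by
      apply Real.exp_le_exp.2; nlinarith
    have h1 : a * ((Real.exp (-2 * (a * x)) - 1) / (-2 * (a * x)))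
        = (1 - Real.exp (-2 * (a * x))) / (2 * x) := by
      field_simp; ring
    have h2 : (Real.exp (-2 * x) - 1) / (-2 * x) = (1 - Real.exp (-2 * x)) / (2 * x) := by
      field_simp; ring
    rw [h1, h2]
    apply div_le_div_of_nonneg_right ?_ (by nlinarith)
    · nlinarith

lemma sr_scale {a : ℝ} (ha : 0 < a) (ha1 : a ≤ 1) (x : ℝ) :
    sr (a * x) ≤ (1 / a) * (Real.exp ((a - 1) * |x|) * sr x) := by
  have h0 : sr (a * x) = sr (a * |x|) := by
    rw [← sr_abs (a * x), abs_mul, abs_of_nonneg ha.le]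
  have h1 : sr x = sr |x| := (sr_abs x).symm
  rw [h0, h1]
  have core := sr_scale_core ha ha1 (abs_nonneg x)
  have e1 : (0:ℝ) < Real.exp (a * |x|) := Real.exp_pos _
  have key : sr (a * |x|) = a * (sr (a * |x|) * Real.exp (-(a * |x|))) *
      ((1 / a) * Real.exp (a * |x|)) := by
    have hex : Real.exp (-(a * |x|)) * Real.exp (a * |x|) = 1 := by
      rw [← Real.exp_add]; simp
    field_simp
    rw [mul_assoc, hex, mul_one]
  rw [key]
  calc a * (sr (a * |x|) * Real.exp (-(a * |x|))) * ((1 / a) * Real.exp (a * |x|))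
      ≤ sr |x| * Real.exp (-|x|) * ((1 / a) * Real.exp (a * |x|)) := by
        apply mul_le_mul_of_nonneg_right core (by positivity)
    _ = (1 / a) * (Real.exp ((a - 1) * |x|) * sr |x|) := by
        rw [show (a - 1) * |x| = -|x| + a * |x| by ring, Real.exp_add]
        ring

lemma r_exp_le {β r : ℝ} (hβ : 0 < β) (hr : 0 ≤ r) :
    r * Real.exp (-(β * r)) ≤ 1 / (Real.exp 1 * β) := by
  have h1 : β * r - 1 + 1 ≤ Real.exp (β * r - 1) := Real.add_one_le_exp _
  have h2 : Real.exp (β * r - 1) = Real.exp (β * r) / Real.exp 1 := by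
    rw [Real.exp_sub]
  have h3 : Real.exp (β * r) * Real.exp (-(β * r)) = 1 := by
    rw [← Real.exp_add]; simp
  have he1 : (0:ℝ) < Real.exp 1 := Real.exp_pos 1
  have he2 : (0:ℝ) < Real.exp (-(β * r)) := Real.exp_pos _
  rw [le_div_iff₀ (by positivity)]
  calc r * Real.exp (-(β * r)) * (Real.exp 1 * β)
      = (β * r) * Real.exp (-(β * r)) * Real.exp 1 := by ring
    _ = (β * r) * (Real.exp (-(β * r)) * Real.exp 1) := by ring
    _ ≤ (Real.exp (β * r) / Real.exp 1) * (Real.exp (-(β * r)) * Real.exp 1) := by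
        apply mul_le_mul_of_nonneg_right _ (by positivity)
        rw [← h2]; linarith
    _ = Real.exp (β * r) * Real.exp (-(β * r)) := by field_simp
    _ = 1 := h3

lemma l1_nonneg {n : ℕ} (k : Fin n → ℤ) : 0 ≤ l1 k :=
  Finset.sum_nonneg fun i _ => abs_nonneg _

lemma l1_sub_le {n : ℕ} (m l : Fin n → ℤ) : l1 (m - l) ≤ l1 m + l1 l := by
  rw [l1, l1, l1, ← Finset.sum_add_distrib]
  apply Finset.sum_le_sum
  intro i _
  have : ((m - l) i : ℝ) = (m i : ℝ) - (l i : ℝ) := by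
    simp [Pi.sub_apply]
  rw [this]
  exact abs_sub _ _

lemma one_le_wt {n : ℕ} (t : ℝ) (k : Fin n → ℤ) : 1 ≤ wt t k := by
  calc (1:ℝ) = ∏ _i : Fin n, 1 := by simp
    _ ≤ ∏ i, sr (t * (k i : ℝ)) :=
        Finset.prod_le_prod (fun i _ => zero_le_one) (fun i _ => one_le_sr _)
    _ = wt t k := rfl

lemma wt_nonneg {n : ℕ} (t : ℝ) (k : Fin n → ℤ) : 0 ≤ wt t k :=
  zero_le_one.trans (one_le_wt t k)

lemma wt_submult {n : ℕ} {t : ℝ} (ht : 0 ≤ t) (m l : Fin n → ℤ) :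
    wt t m ≤ wt t (m - l) * Real.exp (t * l1 l) := by
  have key : ∀ i : Fin n, sr (t * (m i : ℝ)) ≤
      sr (t * ((m - l) i : ℝ)) * Real.exp (t * |(l i : ℝ)|) := by
    intro i
    have h1 := sr_submult (t * (m i : ℝ)) (t * ((m - l) i : ℝ))
    have h2 : |t * (m i : ℝ) - t * ((m - l) i : ℝ)| = t * |(l i : ℝ)| := by
      have hh : ((m - l) i : ℝ) = (m i : ℝ) - (l i : ℝ) := by simp [Pi.sub_apply]
      rw [hh, show t * (m i : ℝ) - t * ((m i : ℝ) - (l i : ℝ)) = t * (l i : ℝ) by ring,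
        abs_mul, abs_of_nonneg ht]
    rw [h2] at h1
    exact h1
  calc wt t m ≤ ∏ i, (sr (t * ((m - l) i : ℝ)) * Real.exp (t * |(l i : ℝ)|)) := by
        apply Finset.prod_le_prod (fun i _ => sr_nonneg _) (fun i _ => key i)
    _ = wt t (m - l) * Real.exp (t * l1 l) := by
        rw [Finset.prod_mul_distrib, ← Real.exp_sum]
        congr 1
        rw [l1, Finset.mul_sum]

lemma wt_scale {n : ℕ} {a : ℝ} (ha : 0 < a) (ha1 : a ≤ 1) (t : ℝ) (ht : 0 ≤ t)
    (k : Fin n → ℤ) :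
    wt (a * t) k ≤ (1 / a) ^ n * (Real.exp ((a - 1) * (t * l1 k)) * wt t k) := by
  have key : ∀ i : Fin n, sr (a * t * (k i : ℝ)) ≤
      (1 / a) * (Real.exp ((a - 1) * (t * |(k i : ℝ)|)) * sr (t * (k i : ℝ))) := by
    intro i
    have h1 := sr_scale ha ha1 (t * (k i : ℝ))
    have h2 : |t * (k i : ℝ)| = t * |(k i : ℝ)| := by rw [abs_mul, abs_of_nonneg ht]
    rw [h2] at h1
    calc sr (a * t * (k i : ℝ)) = sr (a * (t * (k i : ℝ))) := by ring_nf
      _ ≤ _ := h1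
  calc wt (a * t) k
      ≤ ∏ i, ((1 / a) * (Real.exp ((a - 1) * (t * |(k i : ℝ)|)) * sr (t * (k i : ℝ)))) := by
        apply Finset.prod_le_prod (fun i _ => sr_nonneg _) (fun i _ => key i)
    _ = (1 / a) ^ n * (Real.exp ((a - 1) * (t * l1 k)) * wt t k) := by
        have hsum : ∑ i : Fin n, (a - 1) * (t * |(k i : ℝ)|) = (a - 1) * (t * l1 k) := by
          rw [l1, Finset.mul_sum, Finset.mul_sum]
        rw [Finset.prod_mul_distrib, Finset.prod_mul_distrib, Finset.prod_const,
          ← Real.exp_sum, Finset.card_univ, Fintype.card_fin, hsum, wt]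

lemma sqrt_exp (z : ℝ) : Real.sqrt (Real.exp z) = Real.exp (z / 2) := by
  rw [show Real.exp z = (Real.exp (z / 2)) ^ 2 by rw [sq, ← Real.exp_add]; norm_num]
  exact Real.sqrt_sq (Real.exp_pos _).le

lemma sqrt_inv_pow {a : ℝ} (ha : 0 < a) (n : ℕ) :
    Real.sqrt ((1 / a) ^ n) = 1 / a ^ ((n : ℝ) / 2) := by
  rw [Real.sqrt_eq_rpow, ← Real.rpow_natCast (1 / a) n, ← Real.rpow_mul (by positivity)]
  rw [one_div, Real.inv_rpow ha.le, one_div]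
  congr 2
  ring

open MeasureTheory in
lemma tsum_cs {ι : Type*} [Countable ι] (F G : ι → ENNReal) :
    (∑' k, F k * G k) ^ 2 ≤ (∑' k, F k ^ 2) * (∑' k, G k ^ 2) := by
  letI : MeasurableSpace ι := ⊤
  haveI : MeasurableSingletonClass ι := ⟨fun _ => trivial⟩
  have hF : AEMeasurable F (Measure.count : Measure ι) :=
    (Measurable.aemeasurable (fun _ _ => trivial))
  have hG : AEMeasurable G (Measure.count : Measure ι) :=
    (Measurable.aemeasurable (fun _ _ => trivial))
  have hpq : (2:ℝ).HolderConjugate 2 := Real.HolderConjugate.two_two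
  have h := ENNReal.lintegral_mul_le_Lp_mul_Lq (Measure.count : Measure ι) hpq hF hG
  rw [lintegral_count] at h
  simp only [Pi.mul_apply] at h
  have h2 : ∀ x : ENNReal, x ^ (2:ℝ) = x ^ (2:ℕ) := fun x => by
    rw [← ENNReal.rpow_natCast x 2]; norm_num
  have hs : ∀ (H : ι → ENNReal), (∫⁻ a, H a ^ (2:ℝ) ∂(Measure.count : Measure ι))
      = ∑' a, H a ^ (2:ℕ) := by
    intro H
    rw [← lintegral_count]
    congr 1
    funext a
    exact h2 _
  rw [hs F, hs G] at h
  calc (∑' k, F k * G k) ^ 2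
      ≤ ((∑' a, F a ^ 2) ^ (1/(2:ℝ)) * (∑' a, G a ^ 2) ^ (1/(2:ℝ))) ^ 2 := by
        exact pow_le_pow_left' h 2
    _ = (∑' k, F k ^ 2) * (∑' k, G k ^ 2) := by
        rw [mul_pow, ← h2, ← h2, ← ENNReal.rpow_mul, ← ENNReal.rpow_mul]
        norm_num

lemma half_mul_self (x : ENNReal) : x ^ ((1:ℝ)/2) * x ^ ((1:ℝ)/2) = x := by
  rw [← sq, ← ENNReal.rpow_natCast (x ^ ((1:ℝ)/2)) 2, ← ENNReal.rpow_mul]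
  norm_num

theorem cauchy_estimate (n : ℕ) (s α : ℝ) (hs : 0 < s) (hα0 : 0 < α) (hα1 : α < 1)
    (f : (Fin n → ℤ) → ℂ) (φ : (Fin n → ℤ) → (Fin n → ℂ))
    (hf : Summable fun k : Fin n → ℤ => ‖f k‖ ^ 2 * wt (2 * s) k)
    (hφ : Summable fun k : Fin n → ℤ => ‖φ k‖ * Real.exp (s * l1 k)) :
    stripL2 (fun m => ∑' l : Fin n → ℤ,
        Complex.I * (∑ j, ((m - l) j : ℂ) * φ l j) * f (m - l)) (α * s)
      ≤ (1 / (Real.exp 1 * α ^ ((n : ℝ) / 2))) * (1 / ((1 - α) * s)) *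
        stripL2 f s * (∑' k : Fin n → ℤ, ‖φ k‖ * Real.exp (s * l1 k)) := by
  classical
  set g : (Fin n → ℤ) → ℂ := fun m => ∑' l : Fin n → ℤ,
      Complex.I * (∑ j, ((m - l) j : ℂ) * φ l j) * f (m - l) with hg_def
  set a : (Fin n → ℤ) → ℝ := fun k => ‖f k‖ * Real.sqrt (wt (2 * s) k) with ha_def
  set b : (Fin n → ℤ) → ℝ := fun k => ‖φ k‖ * Real.exp (s * l1 k) with hb_def
  set Kc : ℝ := 1 / (Real.exp 1 * α ^ ((n : ℝ) / 2)) * (1 / ((1 - α) * s)) with hKc_def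
  set A : ℝ := stripL2 f s with hA_def
  set B : ℝ := ∑' k, b k with hB_def
  have h1α : (0:ℝ) < 1 - α := by linarith
  have hrpow : (0:ℝ) < α ^ ((n : ℝ) / 2) := Real.rpow_pos_of_pos hα0 _
  have hKc0 : 0 ≤ Kc := by rw [hKc_def]; positivity
  have hA0 : 0 ≤ A := Real.sqrt_nonneg _
  have ha_nonneg : ∀ k, 0 ≤ a k := fun k => mul_nonneg (norm_nonneg _) (Real.sqrt_nonneg _)
  have hb_nonneg : ∀ k, 0 ≤ b k := fun k => mul_nonneg (norm_nonneg _) (Real.exp_pos _).le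
  have hB0 : 0 ≤ B := tsum_nonneg hb_nonneg
  have hbsum : Summable b := hφ
  have ha2 : ∀ k, a k ^ 2 = ‖f k‖ ^ 2 * wt (2 * s) k := fun k => by
    rw [ha_def]; rw [mul_pow, Real.sq_sqrt (wt_nonneg _ _)]
  have ha2s : Summable (fun k => a k ^ 2) := by
    simp only [ha2]; exact hf
  have hA2 : ∑' k, a k ^ 2 = A ^ 2 := by
    rw [hA_def, stripL2, Real.sq_sqrt (tsum_nonneg (fun k =>
      mul_nonneg (by positivity) (wt_nonneg _ _)))]
    simp only [ha2]
  have hfa : ∀ k, ‖f k‖ ≤ a k := fun k => by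
    have h1 : (1:ℝ) ≤ Real.sqrt (wt (2 * s) k) := Real.one_le_sqrt.2 (one_le_wt _ _)
    calc ‖f k‖ = ‖f k‖ * 1 := (mul_one _).symm
      _ ≤ a k := mul_le_mul_of_nonneg_left h1 (norm_nonneg _)
  have haA : ∀ k, a k ≤ A := fun k => by
    have h1 : a k ^ 2 ≤ A ^ 2 := hA2 ▸ Summable.le_tsum ha2s k (fun _ _ => sq_nonneg _)
    nlinarith [ha_nonneg k]
  have hbφ : ∀ l, ‖φ l‖ ≤ b l := fun l => by
    calc ‖φ l‖ = ‖φ l‖ * 1 := (mul_one _).symm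
      _ ≤ b l := mul_le_mul_of_nonneg_left
          (Real.one_le_exp (mul_nonneg hs.le (l1_nonneg _))) (norm_nonneg _)
  -- pointwise weighted estimate
  have hptw : ∀ m l : Fin n → ℤ, l1 (m - l) * ‖φ l‖ * ‖f (m - l)‖ *
      Real.sqrt (wt (2 * (α * s)) m) ≤ Kc * (a (m - l) * b l) := by
    intro m l
    have w1 : wt (2 * (α * s)) m ≤ wt (2 * (α * s)) (m - l) *
        Real.exp (2 * (α * s) * l1 l) := wt_submult (by positivity) m l
    have w2 : wt (2 * (α * s)) (m - l) ≤ (1 / α) ^ n *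
        (Real.exp ((α - 1) * (2 * s * l1 (m - l))) * wt (2 * s) (m - l)) := by
      have h := wt_scale hα0 hα1.le (2 * s) (by positivity) (m - l)
      rw [show α * (2 * s) = 2 * (α * s) by ring] at h
      exact h
    have s1 : Real.sqrt (wt (2 * (α * s)) m) ≤ Real.sqrt (wt (2 * (α * s)) (m - l)) *
        Real.exp (α * s * l1 l) := by
      have h := Real.sqrt_le_sqrt w1
      rw [Real.sqrt_mul (wt_nonneg _ _), sqrt_exp,
        show 2 * (α * s) * l1 l / 2 = α * s * l1 l by ring] at h
      exact h
    have s2 : Real.sqrt (wt (2 * (α * s)) (m - l)) ≤ (1 / α ^ ((n : ℝ) / 2)) *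
        (Real.exp ((α - 1) * (s * l1 (m - l))) * Real.sqrt (wt (2 * s) (m - l))) := by
      have h := Real.sqrt_le_sqrt w2
      rw [Real.sqrt_mul (by positivity), Real.sqrt_mul (Real.exp_pos _).le, sqrt_exp,
        sqrt_inv_pow hα0,
        show (α - 1) * (2 * s * l1 (m - l)) / 2 = (α - 1) * (s * l1 (m - l)) by ring] at h
      exact h
    have s3 : l1 (m - l) * Real.exp ((α - 1) * (s * l1 (m - l))) ≤
        1 / (Real.exp 1 * ((1 - α) * s)) := by
      have h := r_exp_le (mul_pos h1α hs) (l1_nonneg (m - l))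
      rw [show -((1 - α) * s * l1 (m - l)) = (α - 1) * (s * l1 (m - l)) by ring] at h
      exact h
    have s4 : Real.exp (α * s * l1 l) ≤ Real.exp (s * l1 l) :=
      Real.exp_le_exp.2 (by nlinarith [mul_nonneg (mul_nonneg h1α.le hs.le) (l1_nonneg l)])
    have s5 : Real.sqrt (wt (2 * (α * s)) m) ≤ (1 / α ^ ((n : ℝ) / 2)) *
        (Real.exp ((α - 1) * (s * l1 (m - l))) * Real.sqrt (wt (2 * s) (m - l))) *
        Real.exp (s * l1 l) := by
      calc Real.sqrt (wt (2 * (α * s)) m)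
          ≤ Real.sqrt (wt (2 * (α * s)) (m - l)) * Real.exp (α * s * l1 l) := s1
        _ ≤ ((1 / α ^ ((n : ℝ) / 2)) *
            (Real.exp ((α - 1) * (s * l1 (m - l))) * Real.sqrt (wt (2 * s) (m - l)))) *
            Real.exp (α * s * l1 l) :=
            mul_le_mul_of_nonneg_right s2 (Real.exp_pos _).le
        _ ≤ _ := mul_le_mul_of_nonneg_left s4 (by positivity)
    have hnn : 0 ≤ l1 (m - l) * ‖φ l‖ * ‖f (m - l)‖ :=
      mul_nonneg (mul_nonneg (l1_nonneg _) (norm_nonneg _)) (norm_nonneg _)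
    calc l1 (m - l) * ‖φ l‖ * ‖f (m - l)‖ * Real.sqrt (wt (2 * (α * s)) m)
        ≤ l1 (m - l) * ‖φ l‖ * ‖f (m - l)‖ * ((1 / α ^ ((n : ℝ) / 2)) *
          (Real.exp ((α - 1) * (s * l1 (m - l))) * Real.sqrt (wt (2 * s) (m - l))) *
          Real.exp (s * l1 l)) := mul_le_mul_of_nonneg_left s5 hnn
      _ = (l1 (m - l) * Real.exp ((α - 1) * (s * l1 (m - l)))) * (1 / α ^ ((n : ℝ) / 2)) *
          (‖f (m - l)‖ * Real.sqrt (wt (2 * s) (m - l))) *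
          (‖φ l‖ * Real.exp (s * l1 l)) := by ring
      _ ≤ (1 / (Real.exp 1 * ((1 - α) * s))) * (1 / α ^ ((n : ℝ) / 2)) *
          (‖f (m - l)‖ * Real.sqrt (wt (2 * s) (m - l))) *
          (‖φ l‖ * Real.exp (s * l1 l)) := by
          have hnn2 : 0 ≤ (1 / α ^ ((n : ℝ) / 2)) *
              (‖f (m - l)‖ * Real.sqrt (wt (2 * s) (m - l))) *
              (‖φ l‖ * Real.exp (s * l1 l)) := by positivity
          calc (l1 (m - l) * Real.exp ((α - 1) * (s * l1 (m - l)))) * (1 / α ^ ((n : ℝ) / 2)) *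
              (‖f (m - l)‖ * Real.sqrt (wt (2 * s) (m - l))) *
              (‖φ l‖ * Real.exp (s * l1 l))
              = (l1 (m - l) * Real.exp ((α - 1) * (s * l1 (m - l)))) *
                ((1 / α ^ ((n : ℝ) / 2)) *
                (‖f (m - l)‖ * Real.sqrt (wt (2 * s) (m - l))) *
                (‖φ l‖ * Real.exp (s * l1 l))) := by ring
            _ ≤ (1 / (Real.exp 1 * ((1 - α) * s))) *
                ((1 / α ^ ((n : ℝ) / 2)) *
                (‖f (m - l)‖ * Real.sqrt (wt (2 * s) (m - l))) *
                (‖φ l‖ * Real.exp (s * l1 l))) := mul_le_mul_of_nonneg_right s3 hnn2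
            _ = _ := by ring
      _ = Kc * (a (m - l) * b l) := by
          rw [hKc_def, ha_def, hb_def]
          have h1 : Real.exp 1 ≠ 0 := (Real.exp_pos 1).ne'
          have h2 : α ^ ((n : ℝ) / 2) ≠ 0 := hrpow.ne'
          have h3 : (1 - α) * s ≠ 0 := (mul_pos h1α hs).ne'
          field_simp
  -- summability of the convolution majorants
  have hDs : ∀ m : Fin n → ℤ, Summable fun l => a (m - l) * b l := fun m =>
    Summable.of_nonneg_of_le (fun l => mul_nonneg (ha_nonneg _) (hb_nonneg _))
      (fun l => mul_le_mul_of_nonneg_right (haA _) (hb_nonneg _)) (hbsum.mul_left A)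
  have hD0 : ∀ m : Fin n → ℤ, 0 ≤ ∑' l, a (m - l) * b l := fun m =>
    tsum_nonneg fun l => mul_nonneg (ha_nonneg _) (hb_nonneg _)
  -- the basic norm estimate on g
  have hgm : ∀ m : Fin n → ℤ, ‖g m‖ * Real.sqrt (wt (2 * (α * s)) m) ≤
      Kc * ∑' l, a (m - l) * b l := by
    intro m
    have hterm : ∀ l : Fin n → ℤ, ‖Complex.I * (∑ j, ((m - l) j : ℂ) * φ l j) * f (m - l)‖
        ≤ l1 (m - l) * ‖φ l‖ * ‖f (m - l)‖ := by
      intro l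
      rw [norm_mul, norm_mul, Complex.norm_I, one_mul]
      apply mul_le_mul_of_nonneg_right ?_ (norm_nonneg _)
      calc ‖∑ j, ((m - l) j : ℂ) * φ l j‖ ≤ ∑ j, ‖((m - l) j : ℂ) * φ l j‖ :=
            norm_sum_le _ _
        _ ≤ ∑ j, |(((m - l) j : ℤ) : ℝ)| * ‖φ l‖ := by
            apply Finset.sum_le_sum
            intro j _
            rw [norm_mul, Complex.norm_intCast]
            exact mul_le_mul_of_nonneg_left (norm_le_pi_norm (φ l) j) (abs_nonneg _)
        _ = l1 (m - l) * ‖φ l‖ := by rw [l1, Finset.sum_mul]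
    have hc_nonneg : ∀ l : Fin n → ℤ, 0 ≤ l1 (m - l) * ‖φ l‖ * ‖f (m - l)‖ := fun l =>
      mul_nonneg (mul_nonneg (l1_nonneg _) (norm_nonneg _)) (norm_nonneg _)
    have hcsum : Summable fun l => l1 (m - l) * ‖φ l‖ * ‖f (m - l)‖ := by
      apply Summable.of_nonneg_of_le hc_nonneg
        (f := fun l => (A * l1 m + A * (1 / s)) * b l) ?_ (hbsum.mul_left _)
      intro l
      have h1 : l1 (m - l) ≤ l1 m + l1 l := l1_sub_le m l
      have h2 : ‖f (m - l)‖ ≤ A := (hfa _).trans (haA _)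
      have h4 : l1 l * ‖φ l‖ ≤ (1 / s) * b l := by
        have h5 : s * l1 l ≤ Real.exp (s * l1 l) := by
          linarith [Real.add_one_le_exp (s * l1 l)]
        calc l1 l * ‖φ l‖ ≤ (Real.exp (s * l1 l) / s) * ‖φ l‖ := by
              apply mul_le_mul_of_nonneg_right ?_ (norm_nonneg _)
              rw [le_div_iff₀ hs]
              linarith
          _ = (1 / s) * b l := by rw [hb_def]; ring
      calc l1 (m - l) * ‖φ l‖ * ‖f (m - l)‖ ≤ (l1 m + l1 l) * ‖φ l‖ * A := by
            apply mul_le_mul (mul_le_mul_of_nonneg_right h1 (norm_nonneg _)) h2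
              (norm_nonneg _)
              (mul_nonneg (by linarith [l1_nonneg m, l1_nonneg l]) (norm_nonneg _))
        _ = A * (l1 m * ‖φ l‖) + A * (l1 l * ‖φ l‖) := by ring
        _ ≤ A * (l1 m * b l) + A * ((1 / s) * b l) := by
            apply add_le_add
            · exact mul_le_mul_of_nonneg_left
                (mul_le_mul_of_nonneg_left (hbφ l) (l1_nonneg m)) hA0
            · exact mul_le_mul_of_nonneg_left h4 hA0
        _ = (A * l1 m + A * (1 / s)) * b l := by ring
    have hnsum : Summable fun l : Fin n → ℤ =>
        ‖Complex.I * (∑ j, ((m - l) j : ℂ) * φ l j) * f (m - l)‖ :=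
      Summable.of_nonneg_of_le (fun l => norm_nonneg _) hterm hcsum
    have hg1 : ‖g m‖ ≤ ∑' l, l1 (m - l) * ‖φ l‖ * ‖f (m - l)‖ := by
      rw [hg_def]
      exact (norm_tsum_le_tsum_norm hnsum).trans (Summable.tsum_le_tsum hterm hnsum hcsum)
    calc ‖g m‖ * Real.sqrt (wt (2 * (α * s)) m)
        ≤ (∑' l, l1 (m - l) * ‖φ l‖ * ‖f (m - l)‖) * Real.sqrt (wt (2 * (α * s)) m) :=
          mul_le_mul_of_nonneg_right hg1 (Real.sqrt_nonneg _)
      _ = ∑' l, l1 (m - l) * ‖φ l‖ * ‖f (m - l)‖ * Real.sqrt (wt (2 * (α * s)) m) :=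
          tsum_mul_right.symm
      _ ≤ ∑' l, Kc * (a (m - l) * b l) :=
          Summable.tsum_le_tsum (fun l => hptw m l) (hcsum.mul_right _) ((hDs m).mul_left Kc)
      _ = Kc * ∑' l, a (m - l) * b l := tsum_mul_left
  have hsq : ∀ m : Fin n → ℤ, ‖g m‖ ^ 2 * wt (2 * (α * s)) m ≤
      (Kc * ∑' l, a (m - l) * b l) ^ 2 := by
    intro m
    have h0 : ‖g m‖ ^ 2 * wt (2 * (α * s)) m =
        (‖g m‖ * Real.sqrt (wt (2 * (α * s)) m)) ^ 2 := by
      rw [mul_pow, Real.sq_sqrt (wt_nonneg _ _)]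
    rw [h0]
    exact pow_le_pow_left₀ (mul_nonneg (norm_nonneg _) (Real.sqrt_nonneg _)) (hgm m) 2
  -- pass to ENNReal
  set F : (Fin n → ℤ) → ENNReal := fun k => ENNReal.ofReal (a k) with hF_def
  set G : (Fin n → ℤ) → ENNReal := fun k => ENNReal.ofReal (b k) with hG_def
  have hof : ∀ m : Fin n → ℤ, ENNReal.ofReal (∑' l, a (m - l) * b l) =
      ∑' l, F (m - l) * G l := by
    intro m
    rw [ENNReal.ofReal_tsum_of_nonneg (fun l => mul_nonneg (ha_nonneg _) (hb_nonneg _))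
      (hDs m)]
    congr 1
    funext l
    rw [ENNReal.ofReal_mul (ha_nonneg _)]
  have hcs : ∀ m : Fin n → ℤ, (∑' l, F (m - l) * G l) ^ 2 ≤
      (∑' l, F (m - l) ^ 2 * G l) * (∑' l, G l) := by
    intro m
    have h := tsum_cs (fun l => F (m - l) * G l ^ ((1:ℝ)/2)) (fun l => G l ^ ((1:ℝ)/2))
    have e1 : ∀ l : Fin n → ℤ, F (m - l) * G l ^ ((1:ℝ)/2) * G l ^ ((1:ℝ)/2) =
        F (m - l) * G l := fun l => by rw [mul_assoc, half_mul_self]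
    have e2 : ∀ l : Fin n → ℤ, (F (m - l) * G l ^ ((1:ℝ)/2)) ^ 2 =
        F (m - l) ^ 2 * G l := fun l => by rw [mul_pow, sq (G l ^ ((1:ℝ)/2)), half_mul_self]
    have e3 : ∀ l : Fin n → ℤ, (G l ^ ((1:ℝ)/2)) ^ 2 = G l := fun l => by
      rw [sq, half_mul_self]
    simp only [e1, e2, e3] at h
    exact h
  have htrans : ∀ l : Fin n → ℤ, ∑' m, F (m - l) ^ 2 = ∑' k, F k ^ 2 := by
    intro l
    have h := Equiv.tsum_eq (Equiv.subRight l) (fun k => F k ^ 2)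
    simp only [Equiv.subRight_apply] at h
    exact h
  have hfub : ∑' m, (∑' l, F (m - l) ^ 2 * G l) = (∑' k, F k ^ 2) * ∑' l, G l := by
    rw [ENNReal.tsum_comm]
    calc ∑' l, ∑' m, F (m - l) ^ 2 * G l = ∑' l, (∑' m, F (m - l) ^ 2) * G l := by
          congr 1
          funext l
          rw [ENNReal.tsum_mul_right]
      _ = ∑' l, (∑' k, F k ^ 2) * G l := by
          congr 1
          funext l
          rw [htrans l]
      _ = (∑' k, F k ^ 2) * ∑' l, G l := ENNReal.tsum_mul_left
  have hSA : ∑' k, F k ^ 2 = ENNReal.ofReal (A ^ 2) := by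
    rw [← hA2, ENNReal.ofReal_tsum_of_nonneg (fun k => sq_nonneg _) ha2s]
    congr 1
    funext k
    rw [ENNReal.ofReal_pow (ha_nonneg _)]
  have hSB : ∑' l, G l = ENNReal.ofReal B := by
    rw [hB_def, ENNReal.ofReal_tsum_of_nonneg hb_nonneg hbsum]
  have hbig : ∑' m, ENNReal.ofReal (‖g m‖ ^ 2 * wt (2 * (α * s)) m) ≤
      ENNReal.ofReal ((Kc * A * B) ^ 2) := by
    calc ∑' m, ENNReal.ofReal (‖g m‖ ^ 2 * wt (2 * (α * s)) m)
        ≤ ∑' m, ENNReal.ofReal ((Kc * ∑' l, a (m - l) * b l) ^ 2) :=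
          ENNReal.tsum_le_tsum fun m => ENNReal.ofReal_le_ofReal (hsq m)
      _ = ∑' m, ENNReal.ofReal Kc ^ 2 * (∑' l, F (m - l) * G l) ^ 2 := by
          congr 1
          funext m
          rw [mul_pow, ENNReal.ofReal_mul (by positivity : (0:ℝ) ≤ Kc ^ 2),
            ENNReal.ofReal_pow hKc0, ENNReal.ofReal_pow (hD0 m), hof m]
      _ = ENNReal.ofReal Kc ^ 2 * ∑' m, (∑' l, F (m - l) * G l) ^ 2 :=
          ENNReal.tsum_mul_left
      _ ≤ ENNReal.ofReal Kc ^ 2 * ((∑' k, F k ^ 2) * (∑' l, G l) * (∑' l, G l)) := by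
          apply mul_le_mul_right
          calc ∑' m, (∑' l, F (m - l) * G l) ^ 2
              ≤ ∑' m, (∑' l, F (m - l) ^ 2 * G l) * (∑' l, G l) :=
                ENNReal.tsum_le_tsum fun m => hcs m
            _ = (∑' m, ∑' l, F (m - l) ^ 2 * G l) * (∑' l, G l) :=
                ENNReal.tsum_mul_right
            _ = (∑' k, F k ^ 2) * (∑' l, G l) * (∑' l, G l) := by rw [hfub]
      _ = ENNReal.ofReal ((Kc * A * B) ^ 2) := by
          rw [hSA, hSB, ← ENNReal.ofReal_pow hKc0,
            ← ENNReal.ofReal_mul (sq_nonneg A),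
            ← ENNReal.ofReal_mul (mul_nonneg (sq_nonneg A) hB0),
            ← ENNReal.ofReal_mul (sq_nonneg Kc)]
          congr 1
          ring
  have hterm_nonneg : ∀ m : Fin n → ℤ, 0 ≤ ‖g m‖ ^ 2 * wt (2 * (α * s)) m := fun m =>
    mul_nonneg (sq_nonneg _) (wt_nonneg _ _)
  have hne : (∑' m, ENNReal.ofReal (‖g m‖ ^ 2 * wt (2 * (α * s)) m)) ≠ ⊤ :=
    (hbig.trans_lt ENNReal.ofReal_lt_top).ne
  have hsummable : Summable fun m : Fin n → ℤ => ‖g m‖ ^ 2 * wt (2 * (α * s)) m := by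
    have h := ENNReal.summable_toReal hne
    have h2 : (fun m : Fin n → ℤ =>
        (ENNReal.ofReal (‖g m‖ ^ 2 * wt (2 * (α * s)) m)).toReal) =
        fun m => ‖g m‖ ^ 2 * wt (2 * (α * s)) m :=
      funext fun m => ENNReal.toReal_ofReal (hterm_nonneg m)
    rwa [h2] at h
  have hfinal : ∑' m, ‖g m‖ ^ 2 * wt (2 * (α * s)) m ≤ (Kc * A * B) ^ 2 := by
    have h1 := ENNReal.ofReal_tsum_of_nonneg hterm_nonneg hsummable
    rw [← h1] at hbig
    exact (ENNReal.ofReal_le_ofReal_iff (sq_nonneg _)).1 hbig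
  have hgoal : stripL2 g (α * s) ≤ Kc * A * B := by
    rw [stripL2]
    calc Real.sqrt (∑' m, ‖g m‖ ^ 2 * wt (2 * (α * s)) m)
        ≤ Real.sqrt ((Kc * A * B) ^ 2) := Real.sqrt_le_sqrt hfinal
      _ = Kc * A * B := Real.sqrt_sq (mul_nonneg (mul_nonneg hKc0 hA0) hB0)
  calc stripL2 g (α * s) ≤ Kc * A * B := hgoal
    _ = 1 / (Real.exp 1 * α ^ ((n : ℝ) / 2)) * (1 / ((1 - α) * s)) * A * B := by
        rw [hKc_def]

end
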